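/- arXiv:1409.0201 — 2 statements merged into one kernel-verified Lean document; each statement's English description precedes it below -/
import Mathlib

section
/- Let v ≥ 1 be an integer, let α ∈ ℝ^v with mean m(α) > 0, let γ be a real number with γ ≥ 1/(2·m(α)), and let m', l be real numbers satisfying 0 ≤ m' ≤ √(1 − 1/v)·m(α) and l ≥ F₁(α)² − m(α)². Then the relaxed objective function is an upper bound of the non-convex objective function, namely: (γ/v)·‖α + (1/(2γ))·𝟙‖² + (γ/v²)·‖α − S(α)·𝟙‖² − 1/(4γ) − γ·v·m'² + γ·v·l ≥ F₁(α) + γ·F₂(α). -/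
/-- Sum of the entries of `α ∈ ℝ^v`. -/
noncomputable def S (v : ℕ) (α : EuclideanSpace ℝ (Fin v)) : ℝ := ∑ i, α i

/-- Mean of the entries of `α ∈ ℝ^v`. -/
noncomputable def m (v : ℕ) (α : EuclideanSpace ℝ (Fin v)) : ℝ := S v α / v

/-- Mean absolute value `F₁(α) = (1/v)·Σ |α_i|`. -/
noncomputable def F1 (v : ℕ) (α : EuclideanSpace ℝ (Fin v)) : ℝ := (∑ i, |α i|) / v

/-- Variance of absolute values `F₂(α) = (1/v)·Σ (|α_i| − F₁(α))²`. -/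
noncomputable def F2 (v : ℕ) (α : EuclideanSpace ℝ (Fin v)) : ℝ :=
  (∑ i, (|α i| - F1 v α) ^ 2) / v

/-- The all-ones vector `𝟙 ∈ ℝ^v`. -/
noncomputable def ones (v : ℕ) : EuclideanSpace ℝ (Fin v) :=
  (WithLp.equiv 2 (Fin v → ℝ)).symm (fun _ => 1)

lemma aux_ineq (n γ Q A B m' l : ℝ) (hn : 1 ≤ n) (hγ0 : 0 < γ)
    (hA : 0 < A / n) (hγ : 1 / (2 * (A / n)) ≤ γ)
    (hAB : A ≤ B) (hQ : 0 ≤ Q)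
    (hm' : m' ^ 2 ≤ (1 - 1 / n) * (A / n) ^ 2)
    (hl : (B / n) ^ 2 - (A / n) ^ 2 ≤ l) :
    γ / n * (Q + 2 * (1 / (2 * γ)) * A + n * (1 / (2 * γ)) ^ 2)
      + γ / n ^ 2 * (Q - 2 * A * A + n * A ^ 2)
      - 1 / (4 * γ) - γ * n * m' ^ 2 + γ * n * l
    ≥ B / n + γ * ((Q - 2 * (B / n) * B + n * (B / n) ^ 2) / n) := by
  have hn0 : 0 < n := lt_of_lt_of_le one_pos hn
  set mm := A / n with hmm
  set f := B / n with hf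
  have hfm : mm ≤ f := by
    rw [hmm, hf]; exact (div_le_div_iff_of_pos_right hn0).mpr hAB
  have hgm : 1 ≤ 2 * mm * γ := by
    rw [div_le_iff₀ (by positivity)] at hγ
    nlinarith
  have key : f - mm ≤ γ * (f ^ 2 - mm ^ 2) := by
    nlinarith [mul_nonneg (sub_nonneg.2 hfm) (sub_nonneg.2 hgm),
      mul_nonneg hγ0.le (sq_nonneg (f - mm))]
  have lhs1 : γ / n * (Q + 2 * (1 / (2 * γ)) * A + n * (1 / (2 * γ)) ^ 2)
      = γ * Q / n + mm + 1 / (4 * γ) := by rw [hmm]; field_simp; try ring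
  have lhs2 : γ / n ^ 2 * (Q - 2 * A * A + n * A ^ 2)
      = γ * Q / n ^ 2 + γ * (n - 2) * mm ^ 2 := by rw [hmm]; field_simp; try ring
  have rhs1 : f + γ * ((Q - 2 * f * B + n * f ^ 2) / n)
      = f + γ * Q / n - γ * f ^ 2 := by rw [hf]; field_simp; try ring
  rw [lhs1, lhs2, rhs1]
  have e : n * ((1 - 1 / n) * mm ^ 2) = (n - 1) * mm ^ 2 := by field_simp; try ring
  have hm'2 : n * m' ^ 2 ≤ (n - 1) * mm ^ 2 :=
    le_trans (mul_le_mul_of_nonneg_left hm' hn0.le) (le_of_eq e)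
  have hm'3 : γ * (n * m' ^ 2) ≤ γ * ((n - 1) * mm ^ 2) :=
    mul_le_mul_of_nonneg_left hm'2 hγ0.le
  have hl3 : γ * n * (f ^ 2 - mm ^ 2) ≤ γ * n * l :=
    mul_le_mul_of_nonneg_left hl (by positivity)
  have key3 : (n + 1) * (f - mm) ≤ (n + 1) * (γ * (f ^ 2 - mm ^ 2)) :=
    mul_le_mul_of_nonneg_left key (by linarith)
  have hnf : 0 ≤ n * (f - mm) := mul_nonneg hn0.le (sub_nonneg.2 hfm)
  have hQn : 0 ≤ γ * Q / n ^ 2 := by positivity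
  linarith

/-- The relaxed objective function is an upper bound of the non-convex objective function. -/
theorem relaxed_objective_upper_bound
    (v : ℕ) (hv : 1 ≤ v) (α : EuclideanSpace ℝ (Fin v)) (γ m' l : ℝ)
    (hmean : 0 < m v α)
    (hγ : 1 / (2 * m v α) ≤ γ)
    (hm'0 : 0 ≤ m') (hm' : m' ≤ Real.sqrt (1 - 1 / v) * m v α)
    (hl : F1 v α ^ 2 - m v α ^ 2 ≤ l) :
    γ / v * ‖α + (1 / (2 * γ)) • ones v‖ ^ 2
      + γ / v ^ 2 * ‖α - S v α • ones v‖ ^ 2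
      - 1 / (4 * γ) - γ * v * m' ^ 2 + γ * v * l
    ≥ F1 v α + γ * F2 v α := by
  have hn : (1:ℝ) ≤ (v:ℝ) := by exact_mod_cast hv
  have hn0 : (0:ℝ) < (v:ℝ) := lt_of_lt_of_le one_pos hn
  have hγ0 : 0 < γ := lt_of_lt_of_le (by positivity) hγ
  set A := S v α with hA
  set B := ∑ i, |α i| with hB
  set Q := ∑ i, (α i) ^ 2 with hQdef
  have hnorm : ∀ x : EuclideanSpace ℝ (Fin v), ‖x‖ ^ 2 = ∑ i, (x i) ^ 2 := by
    intro x
    rw [EuclideanSpace.norm_eq, Real.sq_sqrt (by positivity)]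
    simp [Real.norm_eq_abs, sq_abs]
  have h1 : ‖α + (1 / (2 * γ)) • ones v‖ ^ 2
      = Q + 2 * (1 / (2 * γ)) * A + (v : ℝ) * (1 / (2 * γ)) ^ 2 := by
    rw [hnorm]
    have : ∀ i, ((α + (1 / (2 * γ)) • ones v) i) ^ 2
        = (α i) ^ 2 + 2 * (1 / (2 * γ)) * (α i) + (1 / (2 * γ)) ^ 2 := by
      intro i
      simp only [PiLp.add_apply, PiLp.smul_apply, ones, WithLp.equiv_symm_apply, PiLp.toLp_apply,
        smul_eq_mul, mul_one]
      ring
    rw [Finset.sum_congr rfl fun i _ => this i]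
    rw [Finset.sum_add_distrib, Finset.sum_add_distrib, ← Finset.mul_sum,
      Finset.sum_const, Finset.card_univ, Fintype.card_fin]
    simp only [nsmul_eq_mul, hQdef, hA, S]
  have h2 : ‖α - A • ones v‖ ^ 2 = Q - 2 * A * A + (v : ℝ) * A ^ 2 := by
    rw [hnorm]
    have : ∀ i, ((α - A • ones v) i) ^ 2
        = (α i) ^ 2 - 2 * A * (α i) + A ^ 2 := by
      intro i
      simp only [PiLp.sub_apply, PiLp.smul_apply, ones, WithLp.equiv_symm_apply, PiLp.toLp_apply,
        smul_eq_mul, mul_one]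
      ring
    rw [Finset.sum_congr rfl fun i _ => this i]
    rw [Finset.sum_add_distrib, Finset.sum_sub_distrib, ← Finset.mul_sum,
      Finset.sum_const, Finset.card_univ, Fintype.card_fin]
    simp only [nsmul_eq_mul, hQdef, hA, S]
  have hF1 : F1 v α = B / v := rfl
  have hF2 : F2 v α = (Q - 2 * (B / v) * B + (v : ℝ) * (B / v) ^ 2) / v := by
    rw [F2, hF1]
    congr 1
    have : ∀ i, (|α i| - B / v) ^ 2
        = (α i) ^ 2 - 2 * (B / v) * |α i| + (B / v) ^ 2 := by
      intro i
      have : |α i| ^ 2 = (α i) ^ 2 := sq_abs _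
      nlinarith [this]
    rw [Finset.sum_congr rfl fun i _ => this i]
    rw [Finset.sum_add_distrib, Finset.sum_sub_distrib, ← Finset.mul_sum,
      Finset.sum_const, Finset.card_univ, Fintype.card_fin]
    simp only [nsmul_eq_mul, hQdef, hB]
  have hmeq : m v α = A / v := rfl
  have hAB : A ≤ B := Finset.sum_le_sum fun i _ => le_abs_self _
  have hQ0 : (0:ℝ) ≤ Q := Finset.sum_nonneg fun i _ => sq_nonneg _
  have hm'2 : m' ^ 2 ≤ (1 - 1 / (v:ℝ)) * (A / v) ^ 2 := by
    have h1n : (0:ℝ) ≤ 1 - 1 / (v:ℝ) := by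
      rw [sub_nonneg, div_le_one hn0]; exact hn
    have hmean' : 0 < A / (v:ℝ) := hmeq ▸ hmean
    have := mul_self_le_mul_self hm'0 (hm'.trans_eq (by rw [hmeq]))
    calc m' ^ 2 = m' * m' := sq m'
      _ ≤ (Real.sqrt (1 - 1 / v) * (A / v)) * (Real.sqrt (1 - 1 / v) * (A / v)) := this
      _ = Real.sqrt (1 - 1 / v) ^ 2 * (A / v) ^ 2 := by ring
      _ = (1 - 1 / (v:ℝ)) * (A / v) ^ 2 := by rw [Real.sq_sqrt h1n]
  rw [h1, h2, hF1, hF2]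
  exact aux_ineq (v : ℝ) γ Q A B m' l hn hγ0 (hmeq ▸ hmean) (hmeq ▸ hγ) hAB hQ0 hm'2
    (by rw [hmeq, hF1] at hl; exact hl)
end

section
/- Let v ≥ 2 be an integer and let γ be a real number with γ > v/(2(v−1)). Then the function f : ℝ^v → ℝ defined by f(α) = F₁(α) + γ·F₂(α) is not convex. -/
/-- For `v ≥ 2` and `γ > v/(2(v−1))`, the objective `α ↦ F₁(α) + γ·F₂(α)` is not convex. -/
theorem objective_not_convex (v : ℕ) (hv : 2 ≤ v) (γ : ℝ)
    (hγ : (v : ℝ) / (2 * (v - 1)) < γ) :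
    ¬ (∀ (x y : EuclideanSpace ℝ (Fin v)) (t : ℝ), 0 ≤ t → t ≤ 1 →
        F1 v (t • x + (1 - t) • y) + γ * F2 v (t • x + (1 - t) • y)
          ≤ t * (F1 v x + γ * F2 v x) + (1 - t) * (F1 v y + γ * F2 v y)) := by
  intro h
  haveI : NeZero v := ⟨by omega⟩
  set n : ℝ := (v : ℝ) with hn
  have hn2 : (2:ℝ) ≤ n := by rw [hn]; exact_mod_cast hv
  have hn0 : (0:ℝ) < n := by linarith
  have hn1 : (0:ℝ) < n - 1 := by linarith
  have hγ0 : 0 < γ := lt_trans (by positivity) hγ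
  have hγn : n / 2 < γ * (n - 1) := by
    have := (div_lt_iff₀ (by positivity)).mp hγ
    nlinarith
  set ε : ℝ := 1 - n/(2*γ*(n-1)) with hεdef
  have hq : 2*γ*(n-1)*ε = 2*γ*(n-1) - n := by
    have hne : 2*γ*(n-1) ≠ 0 := by positivity
    rw [hεdef, mul_sub, mul_one, mul_div_cancel₀ _ hne]
  have hεpos : 0 < ε := by
    have h1 : n/(2*γ*(n-1)) < 1 := by
      rw [div_lt_one (by positivity)]; nlinarith
    simp only [hεdef]; linarith
  have hε1 : ε < 1 := by
    have : 0 < n/(2*γ*(n-1)) := by positivity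
    simp [hεdef]; linarith
  -- sum lemma
  have hsum : ∀ a b : ℝ, ∑ i : Fin v, (if i = (0:Fin v) then a else b) = a + (n-1)*b := by
    intro a b
    rw [← Finset.add_sum_erase _ _ (Finset.mem_univ (0:Fin v))]
    simp only [if_pos rfl]
    congr 1
    rw [Finset.sum_congr rfl (fun i hi => if_neg (Finset.ne_of_mem_erase hi)),
      Finset.sum_const, Finset.card_erase_of_mem (Finset.mem_univ _), Finset.card_univ,
      Fintype.card_fin, nsmul_eq_mul]
    have : ((v - 1 : ℕ) : ℝ) = n - 1 := by
      push_cast [Nat.cast_sub (by omega : 1 ≤ v)]; ring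
    rw [this]
  -- counterexample vectors
  set x : EuclideanSpace ℝ (Fin v) := WithLp.toLp 2 (fun i => if i = 0 then ε else 1) with hx
  set y : EuclideanSpace ℝ (Fin v) := WithLp.toLp 2 (fun i => if i = 0 then -ε else 1) with hy
  -- generic F1/F2 computation
  have hF : ∀ (w : EuclideanSpace ℝ (Fin v)) (a : ℝ),
      (∀ i, |w i| = if i = 0 then a else 1) →
      F1 v w = (a + (n-1))/n ∧
      F2 v w = ((a - (a + (n-1))/n)^2 + (n-1)*(1 - (a + (n-1))/n)^2)/n := by
    intro w a hw
    have h1 : F1 v w = (a + (n-1))/n := by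
      rw [F1]
      congr 1
      rw [Finset.sum_congr rfl (fun i _ => hw i), hsum]
      ring
    refine ⟨h1, ?_⟩
    rw [F2, h1]
    congr 1
    rw [show (∑ i, (|w i| - (a + (n-1))/n) ^ 2)
        = ∑ i : Fin v, (if i = (0:Fin v) then (a - (a + (n-1))/n)^2 else (1 - (a + (n-1))/n)^2) from
      Finset.sum_congr rfl (fun i _ => by rw [hw i]; split <;> rfl), hsum]
  have habs_x : ∀ i, |x i| = if i = 0 then ε else 1 := by
    intro i; rw [hx]; dsimp only; split
    · exact abs_of_pos hεpos
    · exact abs_one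
  have habs_y : ∀ i, |y i| = if i = 0 then ε else 1 := by
    intro i; rw [hy]; dsimp only; split
    · rw [abs_neg]; exact abs_of_pos hεpos
    · exact abs_one
  have hmid : (1/2 : ℝ) • x + (1 - 1/2 : ℝ) • y = (WithLp.toLp 2 (fun i => if i = 0 then 0 else 1) :
      EuclideanSpace ℝ (Fin v)) := by
    ext i
    simp only [PiLp.add_apply, PiLp.smul_apply, smul_eq_mul, hx, hy, PiLp.toLp_apply]
    split <;> ring
  have habs_m : ∀ i : Fin v,
      |(WithLp.toLp 2 (fun i => if i = 0 then 0 else 1) : EuclideanSpace ℝ (Fin v)) i|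
        = if i = 0 then (0:ℝ) else 1 := by
    intro i; dsimp only; split
    · exact abs_zero
    · exact abs_one
  obtain ⟨hF1x, hF2x⟩ := hF x ε habs_x
  obtain ⟨hF1y, hF2y⟩ := hF y ε habs_y
  obtain ⟨hF1m, hF2m⟩ := hF _ 0 habs_m
  have key := h x y (1/2) (by norm_num) (by norm_num)
  rw [hmid, hF1x, hF2x, hF1y, hF2y, hF1m, hF2m] at key
  -- now pure arithmetic contradiction
  have hcon : ¬ ((0 + (n-1))/n + γ * (((0 - (0 + (n-1))/n)^2 + (n-1)*(1 - (0 + (n-1))/n)^2)/n)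
      ≤ 1/2 * ((ε + (n-1))/n + γ * (((ε - (ε + (n-1))/n)^2 + (n-1)*(1 - (ε + (n-1))/n)^2)/n))
      + (1 - 1/2) * ((ε + (n-1))/n + γ * (((ε - (ε + (n-1))/n)^2 + (n-1)*(1 - (ε + (n-1))/n)^2)/n))) := by
    rw [not_le]
    have hkey2 : n < γ*(n-1)*(2-ε) := by nlinarith
    have hprod : 0 < ε * (γ*(n-1)*(2-ε) - n) := mul_pos hεpos (by linarith)
    have hne : n ≠ 0 := ne_of_gt hn0
    rw [show ((1:ℝ) - 1/2) = 1/2 by norm_num, ← two_mul, ← mul_assoc]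
    norm_num
    rw [← sub_pos]
    have heq : (n - 1) / n + γ * ((((n - 1) / n) ^ 2 + (n - 1) * (1 - (n - 1) / n) ^ 2) / n)
        - ((ε + (n - 1)) / n + γ * (((ε - (ε + (n - 1)) / n) ^ 2
            + (n - 1) * (1 - (ε + (n - 1)) / n) ^ 2) / n))
        = (ε * (γ * (n - 1) * (2 - ε) - n)) / n ^ 2 := by
      field_simp
      ring
    rw [heq]
    positivity
  exact hcon key
end
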